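/- Under the hypotheses of the finite-dimensional DBO decomposition (A = UΣY^T with orthonormality and dynamical orthogonality of U and Y) and dA/dt = F with Σ invertible, the spatial basis evolves as U̇ = (I − U U^T) E[F Y] Σ^{-1}. -/

import Mathlib

open Matrix

/-- Finite-dimensional DBO evolution of the spatial basis: under the DBO orthonormality
and dynamical orthogonality conditions, with `dA/dt = F` and `Σ` invertible, the spatial
basis evolves as `U̇ = (I − U Uᵀ) E[F Y] Σ⁻¹`. -/
theorem dbo_spatial_evolution
    {n N r : ℕ} (w : Fin N → ℝ)
    (A F : ℝ → Matrix (Fin n) (Fin N) ℝ)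
    (U U' : ℝ → Matrix (Fin n) (Fin r) ℝ)
    (S S' : ℝ → Matrix (Fin r) (Fin r) ℝ)
    (Y Y' : ℝ → Matrix (Fin N) (Fin r) ℝ)
    (hUd : ∀ t i j, HasDerivAt (fun s => U s i j) (U' t i j) t)
    (hSd : ∀ t i j, HasDerivAt (fun s => S s i j) (S' t i j) t)
    (hYd : ∀ t i j, HasDerivAt (fun s => Y s i j) (Y' t i j) t)
    (hA : ∀ t, A t = U t * S t * (Y t)ᵀ)
    (hAd : ∀ t i j, HasDerivAt (fun s => A s i j) (F t i j) t)
    (hUorth : ∀ t, (U t)ᵀ * U t = 1)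
    (hYorth : ∀ t, (Y t)ᵀ * Matrix.diagonal w * Y t = 1)
    (hUg : ∀ t, (U t)ᵀ * U' t = 0)
    (hYg : ∀ t, (Y' t)ᵀ * Matrix.diagonal w * Y t = 0)
    (hSinv : ∀ t, IsUnit (S t).det) :
    ∀ t, U' t = (1 - U t * (U t)ᵀ) * (F t * Matrix.diagonal w * Y t) * (S t)⁻¹ := by
  have hF : ∀ t, F t = U' t * S t * (Y t)ᵀ + U t * S' t * (Y t)ᵀ + U t * S t * (Y' t)ᵀ := by
    intro t
    ext i j
    have h1 : HasDerivAt (fun s => ∑ l, (∑ k, U s i k * S s k l) * Y s j l)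
        (∑ l, ((∑ k, (U' t i k * S t k l + U t i k * S' t k l)) * Y t j l
          + (∑ k, U t i k * S t k l) * Y' t j l)) t := by
      apply HasDerivAt.fun_sum
      intro l _
      exact (HasDerivAt.fun_sum (fun k _ => (hUd t i k).mul (hSd t k l))).mul (hYd t j l)
    have h2 : (fun s => A s i j) = fun s => ∑ l, (∑ k, U s i k * S s k l) * Y s j l := by
      funext s
      rw [hA s]
      simp [Matrix.mul_apply, Matrix.transpose_apply]
    have h3 := hAd t i j
    rw [h2] at h3
    rw [h3.unique h1]
    simp [Matrix.mul_apply, Matrix.transpose_apply, Finset.sum_add_distrib, 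
      add_mul, Finset.sum_mul]
  intro t
  have hy1 : (Y t)ᵀ * (Matrix.diagonal w * Y t) = 1 := by
    rw [← Matrix.mul_assoc]; exact hYorth t
  have hy2 : (Y' t)ᵀ * (Matrix.diagonal w * Y t) = 0 := by
    rw [← Matrix.mul_assoc]; exact hYg t
  have hE : F t * Matrix.diagonal w * Y t = U' t * S t + U t * S' t := by
    rw [hF t]
    simp only [Matrix.add_mul, Matrix.mul_assoc, hy1, hy2, Matrix.mul_one, Matrix.mul_zero,
      add_zero]
  have hu0 : (U t)ᵀ * (U' t * S t) = 0 := by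
    rw [← Matrix.mul_assoc, hUg t, Matrix.zero_mul]
  have hu1 : (U t)ᵀ * (U t * S' t) = S' t := by
    rw [← Matrix.mul_assoc, hUorth t, Matrix.one_mul]
  have h4 : U t * (U t)ᵀ * (U' t * S t + U t * S' t) = U t * S' t := by
    rw [Matrix.mul_assoc, Matrix.mul_add, hu0, hu1, zero_add]
  rw [hE, Matrix.sub_mul, Matrix.one_mul, h4, add_sub_cancel_right, Matrix.mul_assoc,
    Matrix.mul_nonsing_inv _ (hSinv t), Matrix.mul_one]
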